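/- Let V be a countably infinite set and let D be a family of Boolean functions d : V → {0,1} with finite VC dimension ρ. Then for every ε > 0 there exist two finitely supported probability distributions q₁ and q₂ on V with disjoint supports such that IPM_D(q₁,q₂) < ε. -/

import Mathlib

open scoped BigOperators

namespace GraphDisc

/-- A `k`-distinguisher is symmetric: invariant under all permutations of arguments. -/
def IsSymmetric {V : Type*} {k : ℕ} (g : (Fin k → V) → Bool) : Prop :=
  ∀ (σ : Equiv.Perm (Fin k)) (w : Fin k → V), g (w ∘ σ) = g w

/-- A `k`-distinguishing class: a family of symmetric Boolean `k`-ary functions. -/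
def IsDistinguishingClass {V : Type*} {k : ℕ} (G : Set ((Fin k → V) → Bool)) : Prop :=
  ∀ g ∈ G, IsSymmetric g

/-- `p` is a probability distribution on `V` (as a mass function). -/
def IsDist {V : Type*} (p : V → ℝ) : Prop := (∀ v, 0 ≤ p v) ∧ HasSum p 1

/-- `L_P(g)`: expected value of `g` on a `k`-tuple of i.i.d. samples from `p`. -/
noncomputable def LP {V : Type*} {k : ℕ} (p : V → ℝ) (g : (Fin k → V) → Bool) : ℝ :=
  ∑' w : Fin k → V, (∏ i, p (w i)) * (if g w then 1 else 0)

/-- `L_S(g)`: empirical frequency of `g` on all `k`-tuples from the sample `S`. -/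
noncomputable def LS {V : Type*} {k m : ℕ} (S : Fin m → V) (g : (Fin k → V) → Bool) : ℝ :=
  (∑ t : Fin k → Fin m, if g (S ∘ t) then (1 : ℝ) else 0) / (m : ℝ) ^ k

/-- Probability of an event `E` under an i.i.d. sample of size `m` from `p`. -/
noncomputable def Prob {V : Type*} (p : V → ℝ) {m : ℕ} (E : Set (Fin m → V)) : ℝ :=
  ∑' S : Fin m → V, E.indicator (fun S => ∏ i, p (S i)) S

/-- Probability of an event `E` under two independent i.i.d. samples of size `m`. -/
noncomputable def Prob2 {V : Type*} (p₁ p₂ : V → ℝ) {m : ℕ}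
    (E : Set ((Fin m → V) × (Fin m → V))) : ℝ :=
  ∑' S : (Fin m → V) × (Fin m → V),
    E.indicator (fun S => (∏ i, p₁ (S.1 i)) * ∏ i, p₂ (S.2 i)) S

/-- IPM distance induced by a class of `k`-ary distinguishers. -/
noncomputable def IPM {V : Type*} {k : ℕ} (G : Set ((Fin k → V) → Bool))
    (p₁ p₂ : V → ℝ) : ℝ :=
  ⨆ g ∈ G, |LP p₁ g - LP p₂ g|

/-- `L_P(d)` for a unary Boolean function `d`. -/
noncomputable def LP1 {V : Type*} (p : V → ℝ) (d : V → Bool) : ℝ :=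
  ∑' v : V, p v * (if d v then 1 else 0)

/-- IPM distance for a family of unary Boolean functions. -/
noncomputable def IPM1 {V : Type*} (D : Set (V → Bool)) (p₁ p₂ : V → ℝ) : ℝ :=
  ⨆ d ∈ D, |LP1 p₁ d - LP1 p₂ d|

/-- `L_P(g)` for a binary (curried) Boolean function `g`. -/
noncomputable def LP2 {V : Type*} (p : V → ℝ) (g : V → V → Bool) : ℝ :=
  ∑' w : V × V, (p w.1 * p w.2) * (if g w.1 w.2 then 1 else 0)

/-- `D` shatters the finite set `T`: every Boolean pattern on `T` is realized in `D`. -/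
def Shatters {X : Type*} (D : Set (X → Bool)) (T : Finset X) : Prop :=
  ∀ f : X → Bool, ∃ d ∈ D, ∀ x ∈ T, d x = f x

/-- The VC dimension of a family of Boolean functions. -/
noncomputable def vcDim {X : Type*} (D : Set (X → Bool)) : ℕ∞ :=
  ⨆ T ∈ {T : Finset X | Shatters D T}, (T.card : ℕ∞)

/-- Fixing the first argument of a `(k+1)`-ary function to `v`. -/
def proj {V : Type*} {k : ℕ} (v : V) (g : (Fin (k + 1) → V) → Bool) :
    (Fin k → V) → Bool := fun u => g (Fin.cons v u)

/-- The graph VC dimension, defined inductively: for `k = 1` it is the usual VC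
dimension; for `k > 1` it is the supremum over `v` of the graph VC dimension of the
projected class `G_v`. -/
noncomputable def gvcDim {V : Type*} : (k : ℕ) → Set ((Fin k → V) → Bool) → ℕ∞
  | 0, G => vcDim G
  | 1, G => vcDim G
  | (k + 2), G => ⨆ v : V, gvcDim (k + 1) (proj v '' G)

open Classical in
/-- Mixture `q·δ_v + (1−q)·p`. -/
noncomputable def mix {V : Type*} (q : ℝ) (v : V) (p : V → ℝ) : V → ℝ :=
  fun u => q * (if u = v then 1 else 0) + (1 - q) * p u

/-- The class of majority-vote threshold functions over `m`-tuples from `D`. -/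
noncomputable def thresholdClass {V : Type*} (D : Set (V → Bool)) (m : ℕ) :
    Set (V → Bool) :=
  {h | ∃ d : Fin m → (V → Bool), (∀ i, d i ∈ D) ∧
        h = fun v => decide ((0 : ℝ) ≤ ∑ i, (2 * (if d i v then (1 : ℝ) else 0) - 1))}


section Stmt10Aux

open Finset

/-- Signed sum of a boolean pattern `f` under coloring `χ`. -/
noncomputable def Tsum {n : ℕ} (f χ : Fin n → Bool) : ℝ :=
  ∑ i, if f i then (if χ i then (1:ℝ) else -1) else 0

set_option maxHeartbeats 1000000 in
private lemma sum_exp_le {n : ℕ} (f : Fin n → Bool) (l : ℝ) :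
    ∑ χ : Fin n → Bool, Real.exp (l * Tsum f χ) ≤ (2 * Real.exp (l ^ 2 / 2)) ^ n := by
  classical
  have h1 : ∀ χ : Fin n → Bool, Real.exp (l * Tsum f χ)
      = ∏ i, Real.exp (l * (if f i then (if χ i then (1:ℝ) else -1) else 0)) := by
    intro χ
    rw [Tsum, Finset.mul_sum, Real.exp_sum]
  calc ∑ χ : Fin n → Bool, Real.exp (l * Tsum f χ)
      = ∑ χ : Fin n → Bool,
          ∏ i, Real.exp (l * (if f i then (if χ i then (1:ℝ) else -1) else 0)) :=
        Finset.sum_congr rfl fun χ _ => h1 χ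
    _ = ∏ i, ∑ b : Bool, Real.exp (l * (if f i then (if b then (1:ℝ) else -1) else 0)) :=
        (Fintype.prod_sum (κ := fun _ : Fin n => Bool)
          (fun i b => Real.exp (l * (if f i then (if b then (1:ℝ) else -1) else 0)))).symm
    _ ≤ ∏ _i : Fin n, (2 * Real.exp (l ^ 2 / 2)) := by
        apply Finset.prod_le_prod
        · intro i _
          apply Finset.sum_nonneg
          intro b _
          positivity
        · intro i _
          rw [Fintype.sum_bool]
          have hexp1 : (1:ℝ) ≤ Real.exp (l ^ 2 / 2) := Real.one_le_exp (by positivity)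
          by_cases hf : f i = true
          · have hcosh := Real.cosh_le_exp_half_sq l
            rw [Real.cosh_eq] at hcosh
            simp only [hf, if_true, Bool.false_eq_true, if_false, mul_one, mul_neg_one]
            linarith
          · rw [if_neg hf, if_neg hf, mul_zero, Real.exp_zero]
            linarith
    _ = (2 * Real.exp (l ^ 2 / 2)) ^ n := by
        rw [Finset.prod_const, Finset.card_univ, Fintype.card_fin]

private lemma tail_count_one {n : ℕ} (f : Fin n → Bool) {t : ℝ} (ht : 0 < t) (hn : 0 < n)
    (s : ℝ) (hs : s = 1 ∨ s = -1) :
    ((Finset.univ.filter (fun χ : Fin n → Bool => t < s * Tsum f χ)).card : ℝ)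
      ≤ 2 ^ n * Real.exp (-(t ^ 2) / (2 * n)) := by
  classical
  have hnR : (0:ℝ) < n := by exact_mod_cast hn
  set l : ℝ := t / n with hl
  have hl0 : 0 < l := by positivity
  have hs2 : (l * s) ^ 2 = l ^ 2 := by rcases hs with rfl | rfl <;> ring
  have key : ((Finset.univ.filter (fun χ : Fin n → Bool => t < s * Tsum f χ)).card : ℝ)
      * Real.exp (l * t) ≤ (2 * Real.exp (l ^ 2 / 2)) ^ n := by
    have h1 : ∀ χ ∈ Finset.univ.filter (fun χ : Fin n → Bool => t < s * Tsum f χ),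
        Real.exp (l * t) ≤ Real.exp ((l * s) * Tsum f χ) := by
      intro χ hχ
      rw [Finset.mem_filter] at hχ
      apply Real.exp_le_exp.2
      have h2 : l * t ≤ l * (s * Tsum f χ) :=
        mul_le_mul_of_nonneg_left hχ.2.le hl0.le
      linarith [h2, mul_assoc l s (Tsum f χ)]
    calc ((Finset.univ.filter (fun χ : Fin n → Bool => t < s * Tsum f χ)).card : ℝ)
        * Real.exp (l * t)
        = (Finset.univ.filter (fun χ : Fin n → Bool => t < s * Tsum f χ)).card
            • Real.exp (l * t) := by rw [nsmul_eq_mul]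
      _ ≤ ∑ χ ∈ Finset.univ.filter (fun χ : Fin n → Bool => t < s * Tsum f χ),
            Real.exp ((l * s) * Tsum f χ) := Finset.card_nsmul_le_sum _ _ _ h1
      _ ≤ ∑ χ : Fin n → Bool, Real.exp ((l * s) * Tsum f χ) := by
          apply Finset.sum_le_sum_of_subset_of_nonneg (Finset.filter_subset _ _)
          intro χ _ _
          positivity
      _ ≤ (2 * Real.exp ((l * s) ^ 2 / 2)) ^ n := sum_exp_le f (l * s)
      _ = (2 * Real.exp (l ^ 2 / 2)) ^ n := by rw [hs2]
  have hE : 0 < Real.exp (l * t) := Real.exp_pos _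
  have h3 : ((Finset.univ.filter (fun χ : Fin n → Bool => t < s * Tsum f χ)).card : ℝ)
      ≤ (2 * Real.exp (l ^ 2 / 2)) ^ n * Real.exp (-(l * t)) := by
    rw [Real.exp_neg, ← div_eq_mul_inv]
    exact (le_div_iff₀ hE).2 key
  calc ((Finset.univ.filter (fun χ : Fin n → Bool => t < s * Tsum f χ)).card : ℝ)
      ≤ (2 * Real.exp (l ^ 2 / 2)) ^ n * Real.exp (-(l * t)) := h3
    _ = 2 ^ n * Real.exp (-(t ^ 2) / (2 * n)) := by
        have hne : (n:ℝ) ≠ 0 := hnR.ne'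
        rw [mul_pow, ← Real.exp_nat_mul, mul_assoc, ← Real.exp_add]
        congr 2
        rw [hl]
        field_simp
        ring

private lemma tail_count {n : ℕ} (f : Fin n → Bool) {t : ℝ} (ht : 0 < t) (hn : 0 < n) :
    ((Finset.univ.filter (fun χ : Fin n → Bool => t < |Tsum f χ|)).card : ℝ)
      ≤ 2 ^ n * (2 * Real.exp (-(t ^ 2) / (2 * n))) := by
  classical
  have hsub : Finset.univ.filter (fun χ : Fin n → Bool => t < |Tsum f χ|)
      ⊆ (Finset.univ.filter (fun χ : Fin n → Bool => t < 1 * Tsum f χ))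
        ∪ (Finset.univ.filter (fun χ : Fin n → Bool => t < (-1) * Tsum f χ)) := by
    intro χ hχ
    rw [Finset.mem_filter] at hχ
    rcases lt_abs.1 hχ.2 with h | h
    · exact Finset.mem_union_left _ (Finset.mem_filter.2 ⟨Finset.mem_univ _, by linarith⟩)
    · exact Finset.mem_union_right _ (Finset.mem_filter.2 ⟨Finset.mem_univ _, by linarith⟩)
  have h1 := Finset.card_le_card hsub
  have h2 := Finset.card_union_le
    (Finset.univ.filter (fun χ : Fin n → Bool => t < 1 * Tsum f χ))
    (Finset.univ.filter (fun χ : Fin n → Bool => t < (-1) * Tsum f χ))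
  have h3 := tail_count_one f ht hn 1 (Or.inl rfl)
  have h4 := tail_count_one f ht hn (-1) (Or.inr rfl)
  have h5 : ((Finset.univ.filter (fun χ : Fin n → Bool => t < |Tsum f χ|)).card : ℝ)
      ≤ ((Finset.univ.filter (fun χ : Fin n → Bool => t < 1 * Tsum f χ)).card : ℝ)
        + ((Finset.univ.filter (fun χ : Fin n → Bool => t < (-1) * Tsum f χ)).card : ℝ) := by
    exact_mod_cast h1.trans h2
  linarith

private lemma exists_good {n : ℕ} (F : Finset (Fin n → Bool)) {t : ℝ} (ht : 0 < t)
    (hn : 0 < n) (h : (F.card : ℝ) * (2 * Real.exp (-(t ^ 2) / (2 * n))) < 1) :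
    ∃ χ : Fin n → Bool, ∀ f ∈ F, |Tsum f χ| ≤ t := by
  classical
  by_contra hcon
  push_neg at hcon
  have hsub : (Finset.univ : Finset (Fin n → Bool)) ⊆
      F.biUnion (fun f => Finset.univ.filter (fun χ => t < |Tsum f χ|)) := by
    intro χ _
    obtain ⟨f, hf, hft⟩ := hcon χ
    exact Finset.mem_biUnion.2 ⟨f, hf, Finset.mem_filter.2 ⟨Finset.mem_univ _, hft⟩⟩
  have hcard : ((2:ℝ) ^ n) ≤
      ∑ f ∈ F, ((Finset.univ.filter (fun χ : Fin n → Bool => t < |Tsum f χ|)).card : ℝ) := by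
    have h1 := (Finset.card_le_card hsub).trans (Finset.card_biUnion_le)
    have h2 : (Finset.univ : Finset (Fin n → Bool)).card = 2 ^ n := by
      rw [Finset.card_univ, Fintype.card_fun, Fintype.card_bool, Fintype.card_fin]
    rw [h2] at h1
    exact_mod_cast h1
  have h3 : ∑ f ∈ F, ((Finset.univ.filter (fun χ : Fin n → Bool => t < |Tsum f χ|)).card : ℝ)
      ≤ (F.card : ℝ) * (2 ^ n * (2 * Real.exp (-(t ^ 2) / (2 * n)))) := by
    calc ∑ f ∈ F, ((Finset.univ.filter (fun χ : Fin n → Bool => t < |Tsum f χ|)).card : ℝ)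
        ≤ ∑ _f ∈ F, (2:ℝ) ^ n * (2 * Real.exp (-(t ^ 2) / (2 * n))) :=
          Finset.sum_le_sum fun f _ => tail_count f ht hn
      _ = (F.card : ℝ) * (2 ^ n * (2 * Real.exp (-(t ^ 2) / (2 * n)))) := by
          rw [Finset.sum_const, nsmul_eq_mul]
  have h4 : (0:ℝ) < 2 ^ n := by positivity
  nlinarith [h4, hcard, h3, h]

private lemma trace_card_le {V : Type} {n : ℕ} (D : Set (V → Bool)) (ρ : ℕ)
    (hρ : ∀ T : Finset V, Shatters D T → T.card ≤ ρ)
    (S : Fin n → V) (hS : Function.Injective S)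
    (F₀ : Finset (Fin n → Bool))
    (hF₀ : ∀ f ∈ F₀, ∃ d ∈ D, ∀ i, d (S i) = f i) :
    F₀.card ≤ (ρ + 1) * (n + 1) ^ ρ := by
  classical
  set 𝒜 : Finset (Finset (Fin n)) :=
    F₀.image (fun f => Finset.univ.filter (fun i => f i = true)) with h𝒜def
  have hinj : Function.Injective
      (fun f : Fin n → Bool => Finset.univ.filter (fun i => f i = true)) := by
    intro f g h
    funext i
    have h' : Finset.univ.filter (fun i => f i = true)
        = Finset.univ.filter (fun i => g i = true) := h
    have h1 : (i ∈ Finset.univ.filter (fun i => f i = true))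
        ↔ (i ∈ Finset.univ.filter (fun i => g i = true)) := by rw [h']
    simp only [Finset.mem_filter, Finset.mem_univ, true_and] at h1
    by_cases hf : f i <;> by_cases hg : g i <;> simp_all
  have hcard : F₀.card = 𝒜.card := (Finset.card_image_of_injective F₀ hinj).symm
  have hvc : 𝒜.vcDim ≤ ρ := by
    apply Finset.sup_le
    intro s hs
    rw [Finset.mem_shatterer] at hs
    have hsh : Shatters D (s.image S) := by
      intro φ
      obtain ⟨u, hu, hsu⟩ := hs (Finset.filter_subset (fun i => φ (S i) = true) s)
      obtain ⟨g, hgF₀, hgu⟩ := Finset.mem_image.1 hu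
      obtain ⟨d, hdD, hdg⟩ := hF₀ g hgF₀
      refine ⟨d, hdD, fun x hx => ?_⟩
      obtain ⟨i, his, rfl⟩ := Finset.mem_image.1 hx
      have hiu : i ∈ u ↔ φ (S i) = true := by
        constructor
        · intro hiu
          have h2 : i ∈ s ∩ u := Finset.mem_inter.2 ⟨his, hiu⟩
          rw [hsu] at h2
          exact (Finset.mem_filter.1 h2).2
        · intro hφ
          have h2 : i ∈ s.filter (fun i => φ (S i) = true) :=
            Finset.mem_filter.2 ⟨his, hφ⟩
          rw [← hsu] at h2
          exact (Finset.mem_inter.1 h2).2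
      have hgi : g i = true ↔ i ∈ u := by
        rw [← hgu]
        simp only [Finset.mem_filter, Finset.mem_univ, true_and]
      rw [hdg i]
      cases hb : φ (S i) with
      | true => exact hgi.2 (hiu.2 hb)
      | false =>
        by_contra hg
        have hg' : g i = true := by
          cases hgi2 : g i
          · exact absurd hgi2 hg
          · rfl
        rw [hiu.1 (hgi.1 hg')] at hb
        exact Bool.noConfusion hb
    have h3 : s.card = (s.image S).card := (Finset.card_image_of_injective s hS).symm
    rw [h3]
    exact hρ _ hsh
  have hSauer : 𝒜.card ≤ 𝒜.shatterer.card := Finset.card_le_card_shatterer 𝒜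
  have hSauer2 : 𝒜.shatterer.card ≤ ∑ k ∈ Finset.Iic 𝒜.vcDim, (Fintype.card (Fin n)).choose k :=
    Finset.card_shatterer_le_sum_vcDim
  have hsubset : Finset.Iic 𝒜.vcDim ⊆ Finset.Iic ρ := Finset.Iic_subset_Iic.2 hvc
  have h4 : ∑ k ∈ Finset.Iic 𝒜.vcDim, (Fintype.card (Fin n)).choose k
      ≤ ∑ k ∈ Finset.Iic ρ, (Fintype.card (Fin n)).choose k :=
    Finset.sum_le_sum_of_subset hsubset
  have h5 : ∑ k ∈ Finset.Iic ρ, (Fintype.card (Fin n)).choose k ≤ (ρ + 1) * (n + 1) ^ ρ := by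
    have h6 : ∀ k ∈ Finset.Iic ρ, (Fintype.card (Fin n)).choose k ≤ (n + 1) ^ ρ := by
      intro k hk
      rw [Fintype.card_fin]
      calc n.choose k ≤ n ^ k := Nat.choose_le_pow n k
        _ ≤ (n + 1) ^ k := Nat.pow_le_pow_left (Nat.le_succ n) k
        _ ≤ (n + 1) ^ ρ := Nat.pow_le_pow_right (Nat.le_add_left 1 n) (Finset.mem_Iic.1 hk)
    calc ∑ k ∈ Finset.Iic ρ, (Fintype.card (Fin n)).choose k
        ≤ (Finset.Iic ρ).card * (n + 1) ^ ρ := Finset.sum_le_card_nsmul _ _ _ h6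
      _ = (ρ + 1) * (n + 1) ^ ρ := by rw [Nat.card_Iic]
  omega

private lemma exists_n (ρ : ℕ) {c : ℝ} (hc : 0 < c) :
    ∃ n : ℕ, 1 ≤ n ∧ (((ρ:ℝ) + 1) * ((n:ℝ) + 1) ^ ρ + 1) * (2 * Real.exp (-c * n)) < 1 := by
  have hA : (0:ℝ) < 2 * ((ρ:ℝ) + 2) := by positivity
  set A : ℝ := 2 * ((ρ:ℝ) + 2) with hAdef
  have hη : (0:ℝ) < c ^ ρ * (A * Real.exp c)⁻¹ := by positivity
  have h0 := Real.tendsto_pow_mul_exp_neg_atTop_nhds_zero ρ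
  have h1 : ∀ᶠ x : ℝ in Filter.atTop, x ^ ρ * Real.exp (-x) < c ^ ρ * (A * Real.exp c)⁻¹ :=
    h0.eventually_lt_const hη
  obtain ⟨x₀, hx₀⟩ := Filter.eventually_atTop.1 h1
  obtain ⟨m, hm⟩ := exists_nat_ge (x₀ / c)
  refine ⟨m + 1, by omega, ?_⟩
  set n : ℕ := m + 1 with hndef
  have hxn : x₀ ≤ c * ((n:ℝ) + 1) := by
    have h2 : x₀ ≤ (m:ℝ) * c := (div_le_iff₀ hc).1 hm
    have h3 : (m:ℝ) ≤ (n:ℝ) + 1 := by rw [hndef]; push_cast; linarith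
    nlinarith [hc.le]
  have hkey := hx₀ (c * ((n:ℝ) + 1)) hxn
  set E' : ℝ := Real.exp (-(c * ((n:ℝ) + 1))) with hE'def
  have hE'0 : 0 < E' := Real.exp_pos _
  have hkey2 : c ^ ρ * (((n:ℝ) + 1) ^ ρ * E') < c ^ ρ * (A * Real.exp c)⁻¹ := by
    have := hkey
    rw [mul_pow] at this
    calc c ^ ρ * (((n:ℝ) + 1) ^ ρ * E') = c ^ ρ * ((n:ℝ) + 1) ^ ρ * E' := by ring
      _ < c ^ ρ * (A * Real.exp c)⁻¹ := this
  have hcρ : (0:ℝ) < c ^ ρ := by positivity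
  have hNE : ((n:ℝ) + 1) ^ ρ * E' < (A * Real.exp c)⁻¹ :=
    (mul_lt_mul_iff_right₀ hcρ).1 hkey2
  have hE : Real.exp (-c * (n:ℝ)) = E' * Real.exp c := by
    rw [hE'def, ← Real.exp_add]
    congr 1
    ring
  have hN1 : (1:ℝ) ≤ ((n:ℝ) + 1) ^ ρ := one_le_pow₀ (le_add_of_nonneg_left (Nat.cast_nonneg n))
  have hec : (0:ℝ) < Real.exp c := Real.exp_pos c
  calc (((ρ:ℝ) + 1) * ((n:ℝ) + 1) ^ ρ + 1) * (2 * Real.exp (-c * n))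
      ≤ (((ρ:ℝ) + 2) * ((n:ℝ) + 1) ^ ρ) * (2 * Real.exp (-c * n)) := by
        have h7 : ((ρ:ℝ) + 1) * ((n:ℝ) + 1) ^ ρ + 1 ≤ ((ρ:ℝ) + 2) * ((n:ℝ) + 1) ^ ρ := by
          nlinarith [hN1]
        exact mul_le_mul_of_nonneg_right h7 (by positivity)
    _ = A * Real.exp c * (((n:ℝ) + 1) ^ ρ * E') := by
        rw [hE, hAdef]; ring
    _ < A * Real.exp c * (A * Real.exp c)⁻¹ := by
        have hpos : (0:ℝ) < A * Real.exp c := by positivity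
        exact (mul_lt_mul_iff_right₀ hpos).2 hNE
    _ = 1 := by field_simp
  
private lemma final_arith {P Q a b t : ℝ} (ha0 : 0 < a) (hb0 : 0 < b)
    (hP0 : 0 ≤ P) (hPa : P ≤ a) (hPQ : |P - Q| ≤ t) (hab : |a - b| ≤ t)
    (ht : 0 ≤ t) :
    |1 / a * P - 1 / b * Q| ≤ 2 * t / b := by
  have e1 : 1 / a * P - 1 / b * Q = P * (b - a) / (a * b) + (P - Q) / b := by
    field_simp
    ring
  have hba : |b - a| ≤ t := by rw [abs_sub_comm]; exact hab
  calc |1 / a * P - 1 / b * Q| = |P * (b - a) / (a * b) + (P - Q) / b| := by rw [e1]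
    _ ≤ |P * (b - a) / (a * b)| + |(P - Q) / b| := abs_add_le _ _
    _ ≤ t / b + t / b := by
        apply add_le_add
        · rw [abs_div, abs_mul, abs_of_nonneg hP0, abs_of_pos (mul_pos ha0 hb0)]
          rw [div_le_div_iff₀ (mul_pos ha0 hb0) hb0]
          have h8 : P * |b - a| ≤ a * t := mul_le_mul hPa hba (abs_nonneg _) ha0.le
          nlinarith [mul_le_mul_of_nonneg_right h8 hb0.le]
        · rw [abs_div, abs_of_pos hb0]
          gcongr
    _ = 2 * t / b := by ring

end Stmt10Aux

set_option maxHeartbeats 1600000 in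
/-- indistinguishable distributions with disjoint supports
(Claim `disjoint`). -/
theorem stmt10 (V : Type) [Countable V] [Infinite V]
    (D : Set (V → Bool)) (ρ : ℕ) (hD : vcDim D = (ρ : ℕ∞))
    (ε : ℝ) (hε : 0 < ε) :
    ∃ q₁ q₂ : V → ℝ, IsDist q₁ ∧ IsDist q₂ ∧
      (Function.support q₁).Finite ∧ (Function.support q₂).Finite ∧
      Disjoint (Function.support q₁) (Function.support q₂) ∧
      IPM1 D q₁ q₂ < ε := by
  classical
  have hρ : ∀ T : Finset V, Shatters D T → T.card ≤ ρ := by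
    intro T hT
    have h1 : (T.card : ℕ∞) ≤ vcDim D :=
      le_iSup₂ (f := fun (T : Finset V) (_ : T ∈ {T : Finset V | Shatters D T}) =>
        (T.card : ℕ∞)) T hT
    rw [hD] at h1
    exact_mod_cast h1
  set δ : ℝ := min (ε / 8) (1 / 8) with hδdef
  have hδ0 : 0 < δ := lt_min (by positivity) (by norm_num)
  have hδ1 : δ ≤ 1 / 8 := min_le_right _ _
  have hδε : δ ≤ ε / 8 := min_le_left _ _
  have hc : (0:ℝ) < δ ^ 2 / 2 := by positivity
  obtain ⟨n, hn1, hsmall⟩ := exists_n ρ hc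
  have hn0 : 0 < n := hn1
  have hnR : (0:ℝ) < n := by exact_mod_cast hn0
  set S : Fin n → V := fun i => Infinite.natEmbedding V i with hSdef
  have hS : Function.Injective S := by
    intro i j h
    exact Fin.val_injective ((Infinite.natEmbedding V).injective h)
  set F₀ : Finset (Fin n → Bool) :=
    Set.Finite.toFinset (Set.toFinite {f : Fin n → Bool | ∃ d ∈ D, ∀ i, d (S i) = f i})
    with hF₀def
  set F : Finset (Fin n → Bool) := insert (fun _ => true) F₀ with hFdef
  have hF₀card : F₀.card ≤ (ρ + 1) * (n + 1) ^ ρ := by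
    apply trace_card_le D ρ hρ S hS F₀
    intro f hf
    rw [hF₀def, Set.Finite.mem_toFinset] at hf
    exact hf
  have hFcard : (F.card : ℝ) ≤ ((ρ:ℝ) + 1) * ((n:ℝ) + 1) ^ ρ + 1 := by
    have h1 : F.card ≤ F₀.card + 1 := Finset.card_insert_le _ _
    have h2 : (F₀.card : ℝ) ≤ ((ρ:ℝ) + 1) * ((n:ℝ) + 1) ^ ρ := by
      have := hF₀card
      push_cast
      exact_mod_cast this
    have h3 : (F.card : ℝ) ≤ (F₀.card : ℝ) + 1 := by exact_mod_cast h1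
    linarith
  set t : ℝ := δ * n with htdef
  have ht0 : 0 < t := by positivity
  have hcond : (F.card : ℝ) * (2 * Real.exp (-(t ^ 2) / (2 * n))) < 1 := by
    have hne : (n:ℝ) ≠ 0 := hnR.ne'
    have he : -(t ^ 2) / (2 * (n:ℝ)) = -(δ ^ 2 / 2) * n := by
      rw [htdef]
      field_simp
    rw [he]
    calc (F.card : ℝ) * (2 * Real.exp (-(δ ^ 2 / 2) * n))
        ≤ (((ρ:ℝ) + 1) * ((n:ℝ) + 1) ^ ρ + 1) * (2 * Real.exp (-(δ ^ 2 / 2) * n)) :=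
          mul_le_mul_of_nonneg_right hFcard (by positivity)
      _ < 1 := hsmall
  obtain ⟨χ, hχ⟩ := exists_good F ht0 hn0 hcond
  set A : Finset (Fin n) := Finset.univ.filter (fun i => χ i = true) with hAdef
  set B : Finset (Fin n) := Finset.univ.filter (fun i => ¬(χ i = true)) with hBdef
  set a : ℝ := (A.card : ℝ) with hadef
  set b : ℝ := (B.card : ℝ) with hbdef
  have hABcard : A.card + B.card = n := by
    rw [hAdef, hBdef, Finset.card_filter_add_card_filter_not]
    simp
  have habn : a + b = (n:ℝ) := by
    rw [hadef, hbdef]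
    exact_mod_cast congrArg (fun k : ℕ => (k : ℝ)) hABcard
  have hconstF : (fun _ : Fin n => true) ∈ F := Finset.mem_insert_self _ _
  have hsumA : ∑ i : Fin n, (if χ i = true then (1:ℝ) else 0) = a := by
    rw [Finset.sum_boole]
  have hTconst : Tsum (fun _ : Fin n => true) χ = a - b := by
    have h2 : ∀ i : Fin n, (if χ i = true then (1:ℝ) else -1)
        = 2 * (if χ i = true then (1:ℝ) else 0) - 1 := by
      intro i
      by_cases h : χ i = true <;> simp [h] <;> norm_num
    calc Tsum (fun _ : Fin n => true) χ
        = ∑ i : Fin n, (if χ i = true then (1:ℝ) else -1) := by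
          rw [Tsum]
          exact Finset.sum_congr rfl fun i _ => by rw [if_pos rfl]
      _ = ∑ i : Fin n, (2 * (if χ i = true then (1:ℝ) else 0) - 1) :=
          Finset.sum_congr rfl fun i _ => h2 i
      _ = 2 * a - n := by
          rw [Finset.sum_sub_distrib, ← Finset.mul_sum, hsumA]
          simp
      _ = a - b := by linarith
  have habt : |a - b| ≤ t := by
    rw [← hTconst]
    exact hχ _ hconstF
  have ht8 : 8 * t ≤ (n:ℝ) := by
    rw [htdef]
    nlinarith [mul_le_mul_of_nonneg_right hδ1 hnR.le]
  have hεt : 8 * t ≤ ε * n := by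
    rw [htdef]
    nlinarith [mul_le_mul_of_nonneg_right hδε hnR.le]
  have hba2 : (n - t) / 2 ≤ a ∧ (n - t) / 2 ≤ b := by
    rcases abs_le.1 habt with ⟨h1, h2⟩
    constructor <;> linarith
  have ha0 : 0 < a := by linarith [hba2.1, ht8, ht0]
  have hb0 : 0 < b := by linarith [hba2.2, ht8, ht0]
  set q₁ : V → ℝ := fun v => if v ∈ A.image S then 1 / a else 0 with hq₁def
  set q₂ : V → ℝ := fun v => if v ∈ B.image S then 1 / b else 0 with hq₂def
  have hq₁0 : ∀ v, 0 ≤ q₁ v := by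
    intro v
    rw [hq₁def]
    dsimp only
    split <;> positivity
  have hq₂0 : ∀ v, 0 ≤ q₂ v := by
    intro v
    rw [hq₂def]
    dsimp only
    split <;> positivity
  have hq₁out : ∀ v ∉ A.image S, q₁ v = 0 := by
    intro v hv
    rw [hq₁def]
    dsimp only
    rw [if_neg hv]
  have hq₂out : ∀ v ∉ B.image S, q₂ v = 0 := by
    intro v hv
    rw [hq₂def]
    dsimp only
    rw [if_neg hv]
  have hsum₁ : HasSum q₁ 1 := by
    have h1 : HasSum q₁ (∑ v ∈ A.image S, q₁ v) := hasSum_sum_of_ne_finset_zero (s := A.image S) hq₁out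
    have h2 : ∑ v ∈ A.image S, q₁ v = 1 := by
      calc ∑ v ∈ A.image S, q₁ v = ∑ v ∈ A.image S, 1 / a :=
            Finset.sum_congr rfl fun v hv => by rw [hq₁def]; dsimp only; rw [if_pos hv]
        _ = (A.image S).card * (1 / a) := by rw [Finset.sum_const, nsmul_eq_mul]
        _ = 1 := by
            rw [Finset.card_image_of_injective A hS, ← hadef]
            field_simp
    rwa [h2] at h1
  have hsum₂ : HasSum q₂ 1 := by
    have h1 : HasSum q₂ (∑ v ∈ B.image S, q₂ v) := hasSum_sum_of_ne_finset_zero (s := B.image S) hq₂out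
    have h2 : ∑ v ∈ B.image S, q₂ v = 1 := by
      calc ∑ v ∈ B.image S, q₂ v = ∑ v ∈ B.image S, 1 / b :=
            Finset.sum_congr rfl fun v hv => by rw [hq₂def]; dsimp only; rw [if_pos hv]
        _ = (B.image S).card * (1 / b) := by rw [Finset.sum_const, nsmul_eq_mul]
        _ = 1 := by
            rw [Finset.card_image_of_injective B hS, ← hbdef]
            field_simp
    rwa [h2] at h1
  have hsupp₁ : Function.support q₁ ⊆ ↑(A.image S) := by
    intro v hv
    by_contra hmem
    exact hv (hq₁out v (by simpa using hmem))
  have hsupp₂ : Function.support q₂ ⊆ ↑(B.image S) := by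
    intro v hv
    by_contra hmem
    exact hv (hq₂out v (by simpa using hmem))
  have hdisjAB : Disjoint (↑(A.image S) : Set V) (↑(B.image S) : Set V) := by
    rw [Finset.disjoint_coe]
    rw [Finset.disjoint_left]
    intro v hvA hvB
    obtain ⟨i, hi, rfl⟩ := Finset.mem_image.1 hvA
    obtain ⟨j, hj, hji⟩ := Finset.mem_image.1 hvB
    have hij : j = i := hS hji
    subst hij
    rw [hAdef, Finset.mem_filter] at hi
    rw [hBdef, Finset.mem_filter] at hj
    exact hj.2 hi.2
  refine ⟨q₁, q₂, ⟨hq₁0, hsum₁⟩, ⟨hq₂0, hsum₂⟩,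
    (A.image S).finite_toSet.subset hsupp₁,
    (B.image S).finite_toSet.subset hsupp₂,
    Set.disjoint_of_subset hsupp₁ hsupp₂ hdisjAB, ?_⟩
  -- the IPM bound
  have h2tb0 : (0:ℝ) ≤ 2 * t / b := by positivity
  have hdbound : ∀ d ∈ D, |LP1 q₁ d - LP1 q₂ d| ≤ 2 * t / b := by
    intro d hdD
    have hL₁ : LP1 q₁ d = 1 / a * ∑ i ∈ A, (if d (S i) then (1:ℝ) else 0) := by
      rw [LP1, tsum_eq_sum (s := A.image S)
        (fun v hv => by rw [hq₁out v hv, zero_mul])]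
      rw [Finset.sum_image (fun i _ j _ h => hS h), Finset.mul_sum]
      apply Finset.sum_congr rfl
      intro i hi
      have hmem : S i ∈ A.image S := Finset.mem_image_of_mem _ hi
      rw [hq₁def]
      dsimp only
      rw [if_pos hmem]
    have hL₂ : LP1 q₂ d = 1 / b * ∑ i ∈ B, (if d (S i) then (1:ℝ) else 0) := by
      rw [LP1, tsum_eq_sum (s := B.image S)
        (fun v hv => by rw [hq₂out v hv, zero_mul])]
      rw [Finset.sum_image (fun i _ j _ h => hS h), Finset.mul_sum]
      apply Finset.sum_congr rfl
      intro i hi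
      have hmem : S i ∈ B.image S := Finset.mem_image_of_mem _ hi
      rw [hq₂def]
      dsimp only
      rw [if_pos hmem]
    set P : ℝ := ∑ i ∈ A, (if d (S i) then (1:ℝ) else 0) with hPdef
    set Q : ℝ := ∑ i ∈ B, (if d (S i) then (1:ℝ) else 0) with hQdef
    have hfF : (fun i => d (S i)) ∈ F := by
      apply Finset.mem_insert_of_mem
      rw [hF₀def, Set.Finite.mem_toFinset]
      exact ⟨d, hdD, fun i => rfl⟩
    have hT : Tsum (fun i => d (S i)) χ = P - Q := by
      rw [Tsum, ← Finset.sum_filter_add_sum_filter_not Finset.univ (fun i => χ i = true),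
        ← hAdef, ← hBdef]
      have e1 : ∑ i ∈ A, (if d (S i) then (if χ i then (1:ℝ) else -1) else 0) = P := by
        rw [hPdef]
        apply Finset.sum_congr rfl
        intro i hi
        rw [hAdef, Finset.mem_filter] at hi
        rw [if_pos hi.2]
      have e2 : ∑ i ∈ B, (if d (S i) then (if χ i then (1:ℝ) else -1) else 0) = -Q := by
        rw [hQdef, ← Finset.sum_neg_distrib]
        apply Finset.sum_congr rfl
        intro i hi
        rw [hBdef, Finset.mem_filter] at hi
        rw [if_neg hi.2]
        by_cases hd : d (S i) = true <;> simp [hd]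
      rw [e1, e2]
      ring
    have hPQ : |P - Q| ≤ t := by
      rw [← hT]
      exact hχ _ hfF
    have hP0 : 0 ≤ P := Finset.sum_nonneg fun i _ => by positivity
    have hPa : P ≤ a := by
      rw [hadef]
      calc P ≤ ∑ _i ∈ A, (1:ℝ) := Finset.sum_le_sum fun i _ => by
            split <;> norm_num
        _ = (A.card : ℝ) := by rw [Finset.sum_const, nsmul_eq_mul, mul_one]
    rw [hL₁, hL₂]
    exact final_arith ha0 hb0 hP0 hPa hPQ habt ht0.le
  have h2tb : 2 * t / b < ε := by
    rw [div_lt_iff₀ hb0]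
    have h1 : ε * ((n - t) / 2) ≤ ε * b := mul_le_mul_of_nonneg_left hba2.2 hε.le
    have h2 : ε * t ≤ ε * ((n:ℝ) / 8) :=
      mul_le_mul_of_nonneg_left (by linarith) hε.le
    linarith [h1, h2, hεt, ht0]
  have hsup : IPM1 D q₁ q₂ ≤ 2 * t / b := by
    rw [IPM1]
    apply Real.iSup_le _ h2tb0
    intro d
    apply Real.iSup_le _ h2tb0
    intro hdD
    exact hdbound d hdD
  exact lt_of_le_of_lt hsup h2tb

end GraphDisc
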